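/- Let $V$ be a real vector space, let $m \ge 1$, and for each index $\gamma \in \{0, \dots, m-1\}$ let $\omega_\gamma : V \to \mathbb{R}$ be a linear functional, $T_\gamma \in \mathbb{R}$, and $\varepsilon_\gamma \in \{-1, +1\}$. Let $\varepsilon \in \{-1,+1\}$ and $r \in \mathbb{R}$, assume $\sum_\gamma \varepsilon_\gamma T_\gamma^2 = \varepsilon$, set $\delta = \sum_\gamma T_\gamma \omega_\gamma$, and define $X_{\alpha\beta} = r\,(T_\beta\, \omega_\alpha - \varepsilon_\alpha \varepsilon_\beta T_\alpha\, \omega_\beta)$ for all indices $\alpha, \beta$. Then for all indices $\alpha, \beta$ and all $u, v \in V$: $\sum_\gamma \big( X_{\alpha\gamma}(u) X_{\gamma\beta}(v) - X_{\alpha\gamma}(v) X_{\gamma\beta}(u) \big) = r\big( X_{\alpha\beta}(u)\,\delta(v) - X_{\alpha\beta}(v)\,\delta(u) \big) - r^2\, \varepsilon\, \varepsilon_\beta \big( \omega_\alpha(u)\,\omega_\beta(v) - \omega_\alpha(v)\,\omega_\beta(u) \big).$ -/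
import Mathlib


open Finset

/-- Pointwise form of the wedge identity
`(X ∧ X)_{αβ} = r X_{αβ} ∧ δ - r² ε ε_β ω_α ∧ ω_β` for
`X_{αβ} = r (T_β ω_α - ε_α ε_β T_α ω_β)`, assuming `∑ γ, ε_γ T_γ² = ε`. -/
theorem stmt_8 (V : Type*) [AddCommGroup V] [Module ℝ V]
    (m : ℕ) (hm : 1 ≤ m)
    (ω : Fin m → (V →ₗ[ℝ] ℝ)) (T : Fin m → ℝ) (εs : Fin m → ℝ)
    (hεs : ∀ γ, εs γ = 1 ∨ εs γ = -1)
    (ε : ℝ) (hε : ε = 1 ∨ ε = -1) (r : ℝ)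
    (hsum : ∑ γ : Fin m, εs γ * (T γ) ^ 2 = ε)
    (δ : V → ℝ) (hδ : ∀ u : V, δ u = ∑ γ : Fin m, T γ * ω γ u)
    (X : Fin m → Fin m → V → ℝ)
    (hX : ∀ α β : Fin m, ∀ u : V,
      X α β u = r * (T β * ω α u - εs α * εs β * (T α * ω β u))) :
    ∀ α β : Fin m, ∀ u v : V,
      ∑ γ : Fin m, (X α γ u * X γ β v - X α γ v * X γ β u)
        = r * (X α β u * δ v - X α β v * δ u)
          - r ^ 2 * ε * εs β * (ω α u * ω β v - ω α v * ω β u) := by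
  intro α β u v
  have step : ∀ γ : Fin m, X α γ u * X γ β v - X α γ v * X γ β u =
      (r ^ 2 * (T β * ω α u - εs α * εs β * (T α * ω β u))) * (T γ * ω γ v)
      - (r ^ 2 * (T β * ω α v - εs α * εs β * (T α * ω β v))) * (T γ * ω γ u)
      + (-(r ^ 2) * εs β * (ω α u * ω β v - ω α v * ω β u)) * (εs γ * T γ ^ 2) := by
    intro γ
    have h2 : εs γ * εs γ = 1 := by rcases hεs γ with h | h <;> rw [h] <;> ring
    rw [hX, hX, hX, hX]
    linear_combination (r ^ 2 * εs α * εs β * T α * T γ *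
      (ω γ u * ω β v - ω γ v * ω β u)) * h2
  rw [Finset.sum_congr rfl fun γ _ => step γ]
  rw [Finset.sum_add_distrib, Finset.sum_sub_distrib, ← Finset.mul_sum, ← Finset.mul_sum,
    ← Finset.mul_sum, hsum, ← hδ u, ← hδ v, hX α β u, hX α β v]
  ring
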